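/- If C = A(φ) Q A(φ)^H with Q positive definite and A(φ) full column rank L < N, and ψ is an angle with steering generator w distinct from all z_l, then a(ψ) is not orthogonal to the null space of C; i.e., there exists a null-space vector e of C with e^H a(ψ) ≠ 0. -/

import Mathlib

open Matrix ComplexOrder

/-- MUSIC identifiability: if `C = A(φ) Q A(φ)ᴴ` with `Q` positive definite, the
generators `z_l` distinct unit complex numbers, `L < N`, and `w` a unit complex number
distinct from all `z_l`, then the steering vector `a(ψ) = (1, w, …, w^{N-1})` is not
orthogonal to the null space of `C`: some null-space vector `e` of `C` has
`eᴴ a(ψ) ≠ 0`. -/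
theorem stmt14 (N L : ℕ) (hLN : L < N)
    (z : Fin L → ℂ)
    (hzunit : ∀ l, ‖z l‖ = 1)
    (hzdist : ∀ l l', l ≠ l' → z l ≠ z l')
    (w : ℂ) (hwunit : ‖w‖ = 1)
    (hw : ∀ l, w ≠ z l)
    (A : Matrix (Fin N) (Fin L) ℂ)
    (hA : ∀ (n : Fin N) (l : Fin L), A n l = z l ^ (n : ℕ))
    (Q : Matrix (Fin L) (Fin L) ℂ)
    (hQ : Q.PosDef)
    (C : Matrix (Fin N) (Fin N) ℂ)
    (hC : C = A * Q * Aᴴ) :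
    ∃ e : Fin N → ℂ, C.mulVec e = 0 ∧ (∑ n : Fin N, star (e n) * w ^ (n : ℕ)) ≠ 0 := by
  classical
  set p : Polynomial ℂ := ∏ l : Fin L, (Polynomial.X - Polynomial.C (z l)) with hp
  have hdeg : p.natDegree < N := by
    have h1 : p.natDegree ≤ ∑ l : Fin L, (Polynomial.X - Polynomial.C (z l)).natDegree :=
      Polynomial.natDegree_prod_le _ _
    have h2 : ∀ l : Fin L, (Polynomial.X - Polynomial.C (z l)).natDegree = 1 := fun l =>
      Polynomial.natDegree_X_sub_C _
    calc p.natDegree ≤ ∑ l : Fin L, (Polynomial.X - Polynomial.C (z l)).natDegree := h1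
      _ = L := by simp [h2]
      _ < N := hLN
  have heval : ∀ x : ℂ, p.eval x = ∑ n : Fin N, p.coeff (n : ℕ) * x ^ (n : ℕ) := by
    intro x
    rw [Polynomial.eval_eq_sum_range' hdeg x]
    exact (Fin.sum_univ_eq_sum_range (fun n => p.coeff n * x ^ n) N).symm
  refine ⟨fun n => star (p.coeff (n : ℕ)), ?_, ?_⟩
  · have hAe : Aᴴ.mulVec (fun n => star (p.coeff (n : ℕ))) = 0 := by
      funext l
      have : p.eval (z l) = 0 := by
        rw [hp, Polynomial.eval_prod]
        exact Finset.prod_eq_zero (Finset.mem_univ l) (by simp)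
      simp only [Matrix.mulVec, dotProduct, Matrix.conjTranspose_apply, hA,
        Pi.zero_apply]
      calc ∑ n : Fin N, star ((z l) ^ (n : ℕ)) * star (p.coeff (n : ℕ))
          = star (∑ n : Fin N, p.coeff (n : ℕ) * (z l) ^ (n : ℕ)) := by
            rw [star_sum]; exact Finset.sum_congr rfl fun n _ => by
              rw [StarMul.star_mul]
        _ = 0 := by rw [← heval, this, star_zero]
    rw [hC, ← Matrix.mulVec_mulVec, ← Matrix.mulVec_mulVec, hAe]
    simp [Matrix.mulVec_zero]
  · have hpw : p.eval w ≠ 0 := by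
      rw [hp, Polynomial.eval_prod]
      refine Finset.prod_ne_zero_iff.mpr fun l _ => ?_
      simpa [sub_eq_zero] using hw l
    simpa [star_star, ← heval] using hpw
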